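/- arXiv:2502.12844 — 3 statements merged into one kernel-verified Lean document; each statement's English description precedes it below -/
import Mathlib

section
/- The number of necklaces of length n over a k-letter alphabet equals (1/n) · Σ_{d | n} φ(n/d) · k^d, where φ is Euler's totient function. -/
/-- Cyclic rotation equivalence on words of length `n` over a `k`-letter alphabet. -/
def rotSetoid (k n : ℕ) : Setoid (Fin n → Fin k) where
  r w w' := ∃ j : ℤ, w' = w ∘ ⇑((finRotate n) ^ j)
  iseqv := by
    refine ⟨fun w => ⟨0, by simp⟩, ?_, ?_⟩
    · rintro w w' ⟨j, rfl⟩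
      exact ⟨-j, by ext i; simp only [Function.comp_apply]; rw [← Equiv.Perm.mul_apply, ← zpow_add, add_neg_cancel, zpow_zero, Equiv.Perm.one_apply]⟩
    · rintro w w' w'' ⟨j, rfl⟩ ⟨j', rfl⟩
      exact ⟨j + j', by ext i; simp [Function.comp, ← Equiv.Perm.mul_apply, ← zpow_add]⟩

namespace Neck

open Fin.NatCast Fin.IntCast Fin.CommRing

variable {k m : ℕ}

lemma pow_finRotate_apply (a : ℕ) (i : Fin (m+1)) :
    ((finRotate (m+1)) ^ a) i = i + (a : Fin (m+1)) := by
  induction a generalizing i with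
  | zero => simp
  | succ a ih =>
    rw [pow_succ', Equiv.Perm.mul_apply, finRotate_succ_apply, ih]
    push_cast; ring

lemma pow_finRotate_eq_of_cast_eq {a b : ℕ} (h : (a : Fin (m+1)) = (b : Fin (m+1))) :
    (finRotate (m+1)) ^ a = (finRotate (m+1)) ^ b := by
  ext i; simp [pow_finRotate_apply, h]

lemma intCast_eq_intCast_fin {z w : ℤ} (h : ((m+1:ℕ):ℤ) ∣ z - w) :
    ((z : Fin (m+1))) = (w : Fin (m+1)) := by
  have := (CharP.intCast_eq_zero_iff (Fin (m+1)) (m+1) (z - w)).2 (by exact_mod_cast h)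
  rw [Int.cast_sub, sub_eq_zero] at this
  exact this

lemma zpow_finRotate_eq (z : ℤ) :
    (finRotate (m+1)) ^ z = (finRotate (m+1)) ^ (((z : Fin (m+1))).val : ℕ) := by
  have hpos : (0:ℤ) < (m+1 : ℕ) := by positivity
  have h1 : (finRotate (m+1)) ^ ((m+1 : ℕ) : ℤ) = 1 := by
    rw [zpow_natCast]; ext i; simp [pow_finRotate_apply, Fin.natCast_self]
  have hz : z = (m+1 : ℕ) * (z / (m+1 : ℕ)) + z % (m+1 : ℕ) := (Int.mul_ediv_add_emod _ _).symm
  have hmod : (0:ℤ) ≤ z % (m+1 : ℕ) := Int.emod_nonneg z (by positivity)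
  have hlt : z % (m+1 : ℕ) < (m+1 : ℕ) := Int.emod_lt_of_pos z hpos
  set r : ℕ := (z % (m+1 : ℕ)).toNat with hr
  have hzr : z % (m+1 : ℕ) = (r : ℤ) := (Int.toNat_of_nonneg hmod).symm
  have hrlt : r < m+1 := by omega
  have h2 : (finRotate (m+1)) ^ z = (finRotate (m+1)) ^ (r : ℕ) := by
    calc (finRotate (m+1)) ^ z
        = (finRotate (m+1)) ^ ((m+1 : ℕ) * (z / (m+1:ℕ)) + (r:ℤ)) := by rw [← hzr, ← hz]
      _ = ((finRotate (m+1)) ^ ((m+1:ℕ) : ℤ)) ^ (z / (m+1:ℕ)) * (finRotate (m+1)) ^ (r:ℤ) := by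
          rw [zpow_add, zpow_mul]
      _ = (finRotate (m+1)) ^ (r : ℕ) := by rw [h1, one_zpow, one_mul, zpow_natCast]
  rw [h2]
  apply pow_finRotate_eq_of_cast_eq
  have hc : ((z : Fin (m+1))) = ((r : ℕ) : Fin (m+1)) := by
    have h3 : ((r:ℕ) : Fin (m+1)) = ((r:ℤ) : Fin (m+1)) := (Int.cast_natCast r).symm
    rw [h3]
    exact intCast_eq_intCast_fin ⟨z / (m+1:ℕ), by omega⟩
  rw [hc, Fin.val_natCast r (m+1), Nat.mod_eq_of_lt hrlt]

/-- invariance of a word under rotation by `c` -/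
def Invc (c : Fin (m+1)) (w : Fin (m+1) → Fin k) : Prop := ∀ i, w (i + c) = w i

lemma invc_nsmul {c : Fin (m+1)} {w : Fin (m+1) → Fin k} (hc : Invc c w) (a : ℕ) :
    Invc (a • c) w := by
  induction a with
  | zero => intro i; simp
  | succ a ih =>
    intro i
    have h1 : i + (a+1) • c = (i + c) + a • c := by rw [succ_nsmul]; ring
    rw [h1, ih (i + c), hc i]

lemma invc_neg {c : Fin (m+1)} {w : Fin (m+1) → Fin k} (hc : Invc c w) : Invc (-c) w := by
  intro i
  have := hc (i + -c)
  rw [show i + -c + c = i by ring] at this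
  exact this.symm

lemma invc_zsmul {c : Fin (m+1)} {w : Fin (m+1) → Fin k} (hc : Invc c w) (z : ℤ) :
    Invc (z • c) w := by
  rcases z.eq_nat_or_neg with ⟨a, rfl | rfl⟩
  · rw [natCast_zsmul]; exact invc_nsmul hc a
  · rw [neg_zsmul, natCast_zsmul]; exact invc_neg (invc_nsmul hc a)

lemma invc_gcd {t : ℕ} {w : Fin (m+1) → Fin k} :
    Invc ((t : Fin (m+1))) w ↔ Invc ((Nat.gcd (m+1) t : ℕ) : Fin (m+1)) w := by
  constructor
  · intro h
    have hb := Nat.gcd_eq_gcd_ab (m+1) t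
    have hcast := congrArg (fun z : ℤ => (z : Fin (m+1))) hb
    simp only [Int.cast_add, Int.cast_mul, Int.cast_natCast, Fin.natCast_self, zero_mul,
      zero_add] at hcast
    have h2 : ((Nat.gcd (m+1) t : ℕ) : Fin (m+1)) = Nat.gcdB (m+1) t • ((t:ℕ) : Fin (m+1)) := by
      rw [zsmul_eq_mul, mul_comm]
      exact hcast
    rw [h2]
    exact invc_zsmul h _
  · intro h
    have ht : t / Nat.gcd (m+1) t * Nat.gcd (m+1) t = t :=
      Nat.div_mul_cancel (Nat.gcd_dvd_right _ _)
    have h2 : ((t : ℕ) : Fin (m+1))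
        = (t / Nat.gcd (m+1) t) • ((Nat.gcd (m+1) t : ℕ) : Fin (m+1)) := by
      rw [nsmul_eq_mul, ← Nat.cast_mul]
      exact (congrArg (Nat.cast : ℕ → Fin (m+1)) ht).symm
    rw [h2]
    exact invc_nsmul h _

lemma invc_key {g : ℕ} {w : Fin (m+1) → Fin k}
    (hw : Invc ((g : ℕ) : Fin (m+1)) w)
    (i : Fin (m+1)) : w i = w ((i.val % g : ℕ) : Fin (m+1)) := by
  have h1 : i = ((i.val % g : ℕ) : Fin (m+1)) + (i.val / g) • ((g:ℕ) : Fin (m+1)) := by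
    rw [nsmul_eq_mul, ← Nat.cast_mul, ← Nat.cast_add, Nat.mod_add_div' i.val g,
      Fin.cast_val_eq_self]
  conv_lhs => rw [h1]
  exact invc_nsmul hw (i.val / g) _

/-- Words invariant under rotation by `g` (with `g ∣ m+1`) are determined by their
first `g` letters. -/
def invcEquiv {g : ℕ} (hg : 0 < g) (hgn : g ∣ m+1) :
    {w : Fin (m+1) → Fin k // Invc ((g : ℕ) : Fin (m+1)) w} ≃ (Fin g → Fin k) where
  toFun w r := w.1 ((r.val : ℕ) : Fin (m+1))
  invFun v := ⟨fun i => v ⟨i.val % g, Nat.mod_lt _ hg⟩, by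
    intro i
    have hgg : (g % (m+1)) % g = 0 := by
      rcases (Nat.lt_or_ge g (m+1)) with h | h
      · rw [Nat.mod_eq_of_lt h, Nat.mod_self]
      · have : g = m+1 := le_antisymm (Nat.le_of_dvd (Nat.succ_pos m) hgn) h
        simp [this]
    have hv : (i + ((g:ℕ) : Fin (m+1))).val % g = i.val % g := by
      rw [Fin.add_def]
      simp only [Fin.val_natCast]
      rw [Nat.mod_mod_of_dvd _ hgn, Nat.add_mod, hgg, Nat.add_zero,
        Nat.mod_mod_of_dvd _ (dvd_refl g)]
    simp only [hv]⟩
  left_inv w := by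
    apply Subtype.ext
    funext i
    exact (invc_key w.2 i).symm
  right_inv v := by
    funext r
    have h1 : (((r.val : ℕ) : Fin (m+1))).val = r.val := by
      rw [Fin.val_natCast]
      exact Nat.mod_eq_of_lt (lt_of_lt_of_le r.2 (Nat.le_of_dvd (Nat.succ_pos m) hgn))
    simp only [h1]
    congr 1
    exact Fin.ext (Nat.mod_eq_of_lt r.2)

/-- The rotation action of `Fin (m+1)` (as additive group) on words. -/
def rotAction (k m : ℕ) : AddAction (Fin (m+1)) (Fin (m+1) → Fin k) where
  vadd j w := w ∘ ⇑((finRotate (m+1)) ^ (j.val : ℕ))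
  zero_vadd w := by
    show w ∘ ⇑((finRotate (m+1)) ^ ((0 : Fin (m+1)).val : ℕ)) = w
    simp
  add_vadd a b w := by
    show w ∘ ⇑((finRotate (m+1)) ^ (((a + b) : Fin (m+1)).val : ℕ))
      = (w ∘ ⇑((finRotate (m+1)) ^ (b.val : ℕ))) ∘ ⇑((finRotate (m+1)) ^ (a.val : ℕ))
    have h : (finRotate (m+1)) ^ (((a + b) : Fin (m+1)).val : ℕ)
        = (finRotate (m+1)) ^ (b.val : ℕ) * (finRotate (m+1)) ^ (a.val : ℕ) := by
      rw [← pow_add]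
      apply pow_finRotate_eq_of_cast_eq
      push_cast [Fin.cast_val_eq_self]
      ring
    rw [h]
    rfl

attribute [local instance] rotAction

lemma setoid_eq (k m : ℕ) :
    rotSetoid k (m+1) = AddAction.orbitRel (Fin (m+1)) (Fin (m+1) → Fin k) := by
  apply Setoid.ext
  intro w w'
  show (∃ j : ℤ, w' = w ∘ ⇑((finRotate (m+1)) ^ j)) ↔ _
  rw [AddAction.orbitRel_apply, AddAction.mem_orbit_iff]
  constructor
  · rintro ⟨j, rfl⟩
    refine ⟨((-j : ℤ) : Fin (m+1)), ?_⟩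
    show (w ∘ ⇑((finRotate (m+1)) ^ j)) ∘ ⇑((finRotate (m+1)) ^ ((((-j : ℤ) : Fin (m+1))).val : ℕ)) = w
    have h1 : (finRotate (m+1)) ^ j * (finRotate (m+1)) ^ ((((-j : ℤ) : Fin (m+1))).val : ℕ)
        = 1 := by
      rw [← zpow_natCast (finRotate (m+1)) ((((-j : ℤ) : Fin (m+1))).val : ℕ), ← zpow_add]
      rw [zpow_finRotate_eq]
      have h2 : ((j + ((((-j : ℤ) : Fin (m+1))).val : ℕ) : ℤ) : Fin (m+1)) = 0 := by
        push_cast [Fin.cast_val_eq_self]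
        ring
      rw [h2]
      simp
    calc (w ∘ ⇑((finRotate (m+1)) ^ j)) ∘ ⇑((finRotate (m+1)) ^ ((((-j : ℤ) : Fin (m+1))).val : ℕ))
        = w ∘ ⇑((finRotate (m+1)) ^ j * (finRotate (m+1)) ^ ((((-j : ℤ) : Fin (m+1))).val : ℕ)) :=
          rfl
      _ = w := by rw [h1]; simp
  · rintro ⟨g, hg⟩
    refine ⟨-(g.val : ℤ), ?_⟩
    have hg' : w' ∘ ⇑((finRotate (m+1)) ^ (g.val : ℕ)) = w := hg
    have h1 : (finRotate (m+1)) ^ (g.val : ℕ) * (finRotate (m+1)) ^ (-(g.val : ℤ)) = 1 := by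
      rw [← zpow_natCast (finRotate (m+1)) (g.val : ℕ), ← zpow_add]
      simp
    have h2 : (w' ∘ ⇑((finRotate (m+1)) ^ (g.val : ℕ))) ∘ ⇑((finRotate (m+1)) ^ (-(g.val : ℤ)))
        = w' := by
      calc (w' ∘ ⇑((finRotate (m+1)) ^ (g.val : ℕ))) ∘ ⇑((finRotate (m+1)) ^ (-(g.val : ℤ)))
          = w' ∘ ⇑((finRotate (m+1)) ^ (g.val : ℕ) * (finRotate (m+1)) ^ (-(g.val : ℤ))) := rfl
        _ = w' := by rw [h1]; simp
    rw [← hg']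
    exact h2.symm

lemma card_fixedBy (k m : ℕ) (j : Fin (m+1)) :
    Nat.card (AddAction.fixedBy (Fin (m+1) → Fin k) j) = k ^ Nat.gcd (m+1) j.val := by
  have hg : 0 < Nat.gcd (m+1) j.val := Nat.gcd_pos_of_pos_left _ (Nat.succ_pos m)
  have hgn : Nat.gcd (m+1) j.val ∣ m+1 := Nat.gcd_dvd_left _ _
  have hiff : ∀ w : Fin (m+1) → Fin k,
      (j +ᵥ w = w) ↔ Invc ((Nat.gcd (m+1) j.val : ℕ) : Fin (m+1)) w := by
    intro w
    rw [← invc_gcd]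
    show w ∘ ⇑((finRotate (m+1)) ^ (j.val : ℕ)) = w ↔ _
    rw [funext_iff]
    constructor
    · intro h i
      have := h i
      rwa [Function.comp_apply, pow_finRotate_apply] at this
    · intro h i
      rw [Function.comp_apply, pow_finRotate_apply]
      exact h i
  have e : (AddAction.fixedBy (Fin (m+1) → Fin k) j)
      ≃ (Fin (Nat.gcd (m+1) j.val) → Fin k) :=
    (Equiv.subtypeEquivRight hiff).trans (invcEquiv hg hgn)
  rw [Nat.card_congr e]
  simp [Nat.card_eq_fintype_card]

end Neck

/-- The number of necklaces of length `n` over a `k`-letter alphabet equals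
`(1/n) · Σ_{d ∣ n} φ(n/d) · k^d`. -/
theorem stmt1 (k n : ℕ) (hn : 0 < n) :
    n * Nat.card (Quotient (rotSetoid k n)) =
      ∑ d ∈ n.divisors, Nat.totient (n / d) * k ^ d := by
  obtain ⟨m, rfl⟩ : ∃ m, n = m+1 := ⟨n-1, by omega⟩
  classical
  letI := Neck.rotAction k m
  letI : ∀ a : Fin (m+1), Fintype (AddAction.fixedBy (Fin (m+1) → Fin k) a) :=
    fun _ => Fintype.ofFinite _
  letI : Fintype (Quotient (AddAction.orbitRel (Fin (m+1)) (Fin (m+1) → Fin k))) :=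
    Fintype.ofFinite _
  have hb := AddAction.sum_card_fixedBy_eq_card_orbits_mul_card_addGroup
    (Fin (m+1)) (Fin (m+1) → Fin k)
  rw [Neck.setoid_eq k m, Nat.card_eq_fintype_card, Fintype.card_fin] at *
  rw [mul_comm, ← hb]
  have hfix : ∀ j : Fin (m+1),
      Fintype.card (AddAction.fixedBy (Fin (m+1) → Fin k) j) = k ^ Nat.gcd (m+1) j.val := by
    intro j
    rw [← Nat.card_eq_fintype_card]
    exact Neck.card_fixedBy k m j
  rw [Finset.sum_congr rfl fun j _ => hfix j]
  rw [Fin.sum_univ_eq_sum_range (fun t => k ^ Nat.gcd (m+1) t) (m+1)]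
  have hmaps : ∀ t ∈ Finset.range (m+1), Nat.gcd (m+1) t ∈ (m+1).divisors := by
    intro t _
    exact Nat.mem_divisors.2 ⟨Nat.gcd_dvd_left _ _, Nat.succ_ne_zero m⟩
  rw [← Finset.sum_fiberwise_of_maps_to hmaps (fun t => k ^ Nat.gcd (m+1) t)]
  refine Finset.sum_congr rfl ?_
  intro d hd
  have hddvd : d ∣ m+1 := Nat.dvd_of_mem_divisors hd
  rw [Finset.sum_congr rfl (fun x hx => by rw [(Finset.mem_filter.1 hx).2]),
    Finset.sum_const, smul_eq_mul, Nat.totient_div_of_dvd hddvd]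
end

section
/- For c ≥ 1, a word u = u_1 u_2 ⋯ u_n is the Burrows–Wheeler transform of an aperiodic necklace [w] if and only if the word u_1^c u_2^c ⋯ u_n^c (each letter repeated c times) is the Burrows–Wheeler transform of the necklace [w^c]. -/
open List

/-- The Burrows–Wheeler transform of a word `w`: the list of last letters of the
rotations of `w` (listed with multiplicity) sorted in ascending lexicographic order. -/
def bwt {k : ℕ} (w : List (Fin k)) : List (Fin k) :=
  (List.insertionSort (· ≤ ·) ((List.range w.length).map (fun i => w.rotate i))).filterMap
    List.getLast?

/-- `w` is a primitive (non-power) nonempty word. -/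
def Primitive {k : ℕ} (w : List (Fin k)) : Prop :=
  w ≠ [] ∧ ∀ (v : List (Fin k)) (m : ℕ), w = (List.replicate m v).flatten → m = 1

section Aux

lemma lex_append_iff {α : Type*} (r : α → α → Prop) :
    ∀ (s t p q : List α), s.length = t.length →
      (List.Lex r (s ++ p) (t ++ q) ↔ List.Lex r s t ∨ (s = t ∧ List.Lex r p q)) := by
  intro s
  induction s with
  | nil =>
    intro t p q h
    cases t with
    | nil =>
      simp only [nil_append]
      constructor
      · intro hl; right; exact ⟨by trivial, hl⟩
      · rintro (hl | ⟨-, hl⟩)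
        · cases hl
        · exact hl
    | cons b t => simp at h
  | cons a s ih =>
    intro t p q h
    cases t with
    | nil => simp at h
    | cons b t =>
      simp only [length_cons, Nat.succ_inj] at h
      simp only [cons_append]
      constructor
      · intro hl
        cases hl with
        | rel hab => exact Or.inl (List.Lex.rel hab)
        | cons hl =>
          rcases (ih t p q h).1 hl with h1 | ⟨rfl, h2⟩
          · exact Or.inl (List.Lex.cons h1)
          · exact Or.inr ⟨rfl, h2⟩
      · rintro (hl | ⟨he, hl⟩)
        · cases hl with
          | rel hab => exact List.Lex.rel hab
          | cons hl => exact List.Lex.cons ((ih t p q h).2 (Or.inl hl))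
        · cases he
          exact List.Lex.cons ((ih _ p q rfl).2 (Or.inr ⟨rfl, hl⟩))

variable {k : ℕ}

lemma pow_lt_iff {x y : List (Fin k)} (h : x.length = y.length) (c' : ℕ) :
    (List.replicate (c' + 1) x).flatten < (List.replicate (c' + 1) y).flatten ↔ x < y := by
  have e : ∀ z : List (Fin k), (List.replicate (c' + 1) z).flatten
      = z ++ (List.replicate c' z).flatten := by
    intro z; rw [replicate_succ, flatten_cons]
  rw [e, e]
  constructor
  · intro hlt
    rcases (lex_append_iff (· < ·) x y _ _ h).1 hlt with h1 | ⟨rfl, h2⟩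
    · exact h1
    · exact absurd
        (show (List.replicate c' x).flatten < (List.replicate c' x).flatten from h2)
        (lt_irrefl _)
  · intro hlt
    exact (lex_append_iff (· < ·) x y _ _ h).2 (Or.inl hlt)

lemma pow_le_iff {c : ℕ} (hc : c ≠ 0) {x y : List (Fin k)} (h : x.length = y.length) :
    (List.replicate c x).flatten ≤ (List.replicate c y).flatten ↔ x ≤ y := by
  obtain ⟨c', rfl⟩ : ∃ c', c = c' + 1 :=
    ⟨c - 1, (Nat.succ_pred_eq_of_pos (Nat.pos_of_ne_zero hc)).symm⟩
  rw [← not_lt, ← not_lt]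
  exact not_congr (pow_lt_iff h.symm c')

lemma flatten_rep_take (m : ℕ) (w : List (Fin k)) (i : ℕ) (hi : i ≤ w.length) :
    (List.replicate m w).flatten ++ w.take i
      = w.take i ++ (List.replicate m (w.rotate i)).flatten := by
  induction m with
  | zero => simp
  | succ m ihm =>
    rw [replicate_succ, flatten_cons, append_assoc, ihm, rotate_eq_drop_append_take hi,
      replicate_succ, flatten_cons]
    have h1 : w ++ w.take i = w.take i ++ (w.drop i ++ w.take i) := by
      rw [← append_assoc, take_append_drop]
    rw [← append_assoc, h1, append_assoc]

lemma rotate_pow {c : ℕ} (hc : c ≠ 0) (w : List (Fin k)) (i : ℕ) (hi : i ≤ w.length) :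
    ((List.replicate c w).flatten).rotate i = (List.replicate c (w.rotate i)).flatten := by
  obtain ⟨c', rfl⟩ : ∃ c', c = c' + 1 :=
    ⟨c - 1, (Nat.succ_pred_eq_of_pos (Nat.pos_of_ne_zero hc)).symm⟩
  have hlen : i ≤ ((List.replicate (c' + 1) w).flatten).length := by
    have h1 : ((List.replicate (c' + 1) w).flatten).length = (c' + 1) * w.length := by
      simp [Nat.mul_comm]
    have h2 : w.length ≤ (c' + 1) * w.length := Nat.le_mul_of_pos_left _ (Nat.succ_pos c')
    omega
  rw [rotate_eq_drop_append_take hlen, replicate_succ, flatten_cons,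
    List.drop_append_of_le_length hi, List.take_append_of_le_length hi,
    append_assoc, flatten_rep_take c' w i hi, ← append_assoc,
    ← rotate_eq_drop_append_take hi, replicate_succ, flatten_cons]

lemma rotate_pow_mul {c : ℕ} (hc : c ≠ 0) (w : List (Fin k)) (m i : ℕ) :
    ((List.replicate c w).flatten).rotate (m * w.length + i)
      = ((List.replicate c w).flatten).rotate i := by
  induction m with
  | zero => simp
  | succ m ihm =>
    have hper : ((List.replicate c w).flatten).rotate w.length
        = (List.replicate c w).flatten := by
      rw [rotate_pow hc w w.length le_rfl, rotate_length]
    have h1 : (m + 1) * w.length + i = w.length + (m * w.length + i) := by ring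
    rw [h1, ← rotate_rotate, hper, ihm]

lemma map_rotate_blocks {c : ℕ} (hc : c ≠ 0) (w : List (Fin k)) (m : ℕ) :
    (List.range (m * w.length)).map ((List.replicate c w).flatten).rotate
      = (List.replicate m
          ((List.range w.length).map ((List.replicate c w).flatten).rotate)).flatten := by
  induction m with
  | zero => simp
  | succ m ihm =>
    rw [Nat.succ_mul, List.range_add, map_append, ihm, map_map]
    have h1 : ((List.replicate c w).flatten).rotate ∘ (fun x => m * w.length + x)
        = ((List.replicate c w).flatten).rotate := by
      funext i; exact rotate_pow_mul hc w m i
    rw [h1, replicate_succ', flatten_append]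
    simp

lemma flatten_replicate_perm {α : Type*} (c : ℕ) (M : List (List α)) :
    (List.replicate c M).flatten ~ M.flatMap (fun x => List.replicate c x) := by
  induction M with
  | nil => simp
  | cons a M ihM =>
    have key : ∀ (n : ℕ) (N : List (List α)),
        (List.replicate n (a :: N)).flatten ~
          List.replicate n a ++ (List.replicate n N).flatten := by
      intro n
      induction n with
      | zero => intro N; simp
      | succ n ihn =>
        intro N
        rw [replicate_succ, flatten_cons]
        calc (a :: N) ++ (List.replicate n (a :: N)).flatten
            ~ (a :: N) ++ (List.replicate n a ++ (List.replicate n N).flatten) :=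
              Perm.append_left _ (ihn N)
          _ = a :: (N ++ (List.replicate n a ++ (List.replicate n N).flatten)) := by simp
          _ ~ a :: (List.replicate n a ++ (N ++ (List.replicate n N).flatten)) := by
              refine Perm.cons _ ?_
              rw [← append_assoc, ← append_assoc]
              exact Perm.append_right _ perm_append_comm
          _ = (List.replicate (n + 1) a) ++ ((List.replicate (n + 1) N).flatten) := by
              simp [replicate_succ]
    calc (List.replicate c (a :: M)).flatten
        ~ List.replicate c a ++ (List.replicate c M).flatten := key c M
      _ ~ List.replicate c a ++ M.flatMap (fun x => List.replicate c x) :=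
          Perm.append_left _ ihM
      _ = (a :: M).flatMap (fun x => List.replicate c x) := by rw [flatMap_cons]

lemma getLast?_pow {c : ℕ} (hc : c ≠ 0) {x : List (Fin k)} (hx : x ≠ []) :
    ((List.replicate c x).flatten).getLast? = x.getLast? := by
  obtain ⟨c', rfl⟩ : ∃ c', c = c' + 1 :=
    ⟨c - 1, (Nat.succ_pred_eq_of_pos (Nat.pos_of_ne_zero hc)).symm⟩
  rw [replicate_succ', flatten_append]
  simp only [flatten_cons, flatten_nil, append_nil]
  rw [getLast?_append, getLast?_eq_getLast hx]
  simp

lemma filterMap_last_pow {c : ℕ} (hc : c ≠ 0) :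
    ∀ (l : List (List (Fin k))), (∀ x ∈ l, x ≠ []) →
      (l.flatMap (fun x => List.replicate c (List.replicate c x).flatten)).filterMap
          List.getLast?
        = (l.filterMap List.getLast?).flatMap (fun a => List.replicate c a) := by
  intro l
  induction l with
  | nil => simp
  | cons x l ihl =>
    intro hne
    have hx : x ≠ [] := hne x mem_cons_self
    obtain ⟨a, ha⟩ : ∃ a, x.getLast? = some a := ⟨x.getLast hx, getLast?_eq_getLast hx⟩
    rw [flatMap_cons, filterMap_append, filterMap_replicate, getLast?_pow hc hx, ha,
      filterMap_cons, ha, flatMap_cons, ihl (fun y hy => hne y (mem_cons_of_mem x hy))]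

lemma flatMap_replicate_inj {c : ℕ} (hc : c ≠ 0) :
    ∀ (u v : List (Fin k)),
      u.flatMap (fun a => List.replicate c a) = v.flatMap (fun a => List.replicate c a) →
        u = v := by
  obtain ⟨c', rfl⟩ : ∃ c', c = c' + 1 :=
    ⟨c - 1, (Nat.succ_pred_eq_of_pos (Nat.pos_of_ne_zero hc)).symm⟩
  intro u
  induction u with
  | nil =>
    intro v h
    cases v with
    | nil => rfl
    | cons b v => simp [replicate_succ] at h
  | cons a u ihu =>
    intro v h
    cases v with
    | nil => simp [replicate_succ] at h
    | cons b v =>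
      rw [flatMap_cons, flatMap_cons, replicate_succ, replicate_succ] at h
      simp only [cons_append, cons.injEq] at h
      obtain ⟨rfl, h⟩ := h
      rw [ihu v (List.append_cancel_left h)]

lemma bwt_pow {c : ℕ} (hc : c ≠ 0) {w : List (Fin k)} (hw : w ≠ []) :
    bwt (List.replicate c w).flatten = (bwt w).flatMap (fun a => List.replicate c a) := by
  classical
  set n := w.length with hn
  set v := (List.replicate c w).flatten with hv
  set R := (List.range n).map (fun i => w.rotate i) with hR
  set Rs := List.insertionSort (· ≤ ·) R with hRs
  have hnpos : 0 < n := length_pos_iff.2 hw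
  have hlenv : v.length = c * n := by simp [hv, Nat.mul_comm]; exact Or.inl rfl
  -- rotations of v over one period are powers of rotations of w
  have h2 : (List.range n).map v.rotate
      = R.map (fun x => (List.replicate c x).flatten) := by
    rw [hR, map_map]
    refine map_congr_left ?_
    intro i hi
    exact rotate_pow hc w i (le_of_lt (mem_range.1 hi))
  -- full list of rotations of v
  have h3 : (List.range v.length).map v.rotate
      ~ Rs.flatMap (fun x => List.replicate c (List.replicate c x).flatten) := by
    calc (List.range v.length).map v.rotate
        = (List.replicate c ((List.range n).map v.rotate)).flatten := by
          rw [hlenv, hn]; exact map_rotate_blocks hc w c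
      _ = (List.replicate c (R.map (fun x => (List.replicate c x).flatten))).flatten := by
          rw [h2]
      _ ~ (R.map (fun x => (List.replicate c x).flatten)).flatMap
            (fun y => List.replicate c y) := flatten_replicate_perm c _
      _ = R.flatMap (fun x => List.replicate c (List.replicate c x).flatten) := by
          rw [flatMap_map]
      _ ~ Rs.flatMap (fun x => List.replicate c (List.replicate c x).flatten) :=
          Perm.flatMap_right _ (perm_insertionSort _ R).symm
  -- each element of Rs has length n and is nonempty
  have hmemRs : ∀ x ∈ Rs, x.length = n := by
    intro x hx
    have hxR : x ∈ R := (perm_insertionSort (· ≤ ·) R).subset hx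
    rw [hR] at hxR
    obtain ⟨i, -, rfl⟩ := mem_map.1 hxR
    exact length_rotate w i
  have hne : ∀ x ∈ Rs, x ≠ [] := by
    intro x hx
    have := hmemRs x hx
    intro hxe; rw [hxe] at this; simp at this; omega
  -- target list is sorted
  have hsortedRs : List.Pairwise (· ≤ ·) Rs := pairwise_insertionSort _ _
  have hsortedS : List.Pairwise (· ≤ ·)
      (Rs.flatMap (fun x => List.replicate c (List.replicate c x).flatten)) := by
    rw [List.flatMap_def]
    refine List.pairwise_flatten.2 ⟨?_, ?_⟩
    · intro l hl
      obtain ⟨x, -, rfl⟩ := mem_map.1 hl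
      exact List.pairwise_replicate.2 (Or.inr le_rfl)
    · rw [List.pairwise_map]
      refine hsortedRs.imp_of_mem ?_
      intro x y hx hy hxy
      intro a ha b hb
      rw [eq_of_mem_replicate ha, eq_of_mem_replicate hb]
      exact (pow_le_iff hc ((hmemRs x hx).trans (hmemRs y hy).symm)).2 hxy
  -- identify the sorted rotations of v
  have h4 : List.insertionSort (· ≤ ·) ((List.range v.length).map (fun i => v.rotate i))
      = Rs.flatMap (fun x => List.replicate c (List.replicate c x).flatten) := by
    refine List.Perm.eq_of_pairwise' (pairwise_insertionSort _ _) hsortedS ?_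
    exact (perm_insertionSort _ _).trans h3
  show (List.insertionSort (· ≤ ·)
      ((List.range v.length).map (fun i => v.rotate i))).filterMap List.getLast? = _
  rw [h4, filterMap_last_pow hc Rs hne]
  rfl

end Aux

/-- For `c ≥ 1`, `u` is the BWT of the aperiodic necklace `[w]` iff the word obtained
from `u` by repeating each letter `c` times is the BWT of `[w^c]`. -/
theorem stmt16 (k c : ℕ) (hc : 1 ≤ c) (w u : List (Fin k)) (hw : Primitive w) :
    bwt w = u ↔
      bwt (List.replicate c w).flatten = u.flatMap (fun a => List.replicate c a) := by
  have hc' : c ≠ 0 := by omega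
  constructor
  · rintro rfl
    exact bwt_pow hc' hw.1
  · intro h
    rw [bwt_pow hc' hw.1] at h
    exact flatMap_replicate_inj hc' _ _ h
end

section
/- A word u over a finite ordered alphabet is the Burrows–Wheeler transform of some aperiodic necklace if and only if the standard permutation of u is a single cycle of length |u|. -/
open List

section Helpers
variable {α : Type*} [LinearOrder α]

lemma lex_cons_iff {x y : α} {a b : List α} :
    (x :: a) < (y :: b) ↔ x < y ∨ (x = y ∧ a < b) := by
  constructor
  · intro h
    cases h with
    | rel h => exact Or.inl h
    | cons h => exact Or.inr ⟨rfl, h⟩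
  · rintro (h | ⟨rfl, h⟩)
    · exact List.Lex.rel h
    · exact List.Lex.cons h

lemma ofFn_lt_of_firstDiff {n : ℕ} {f g : Fin n → α} {m : Fin n}
    (heq : ∀ s, s < m → f s = g s) (hlt : f m < g m) :
    List.ofFn f < List.ofFn g := by
  induction n with
  | zero => exact m.elim0
  | succ n ih =>
    rw [ofFn_succ, ofFn_succ, _root_.lex_cons_iff]
    rcases eq_or_ne m 0 with rfl | hm0
    · exact Or.inl hlt
    · have h0 : f 0 = g 0 := heq 0 (Fin.pos_of_ne_zero hm0)
      refine Or.inr ⟨h0, ?_⟩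
      obtain ⟨m', hm'⟩ : ∃ m' : Fin n, m = m'.succ := ⟨m.pred hm0, (Fin.succ_pred m hm0).symm⟩
      subst hm'
      refine ih (f := fun i => f i.succ) (g := fun i => g i.succ) (m := m') ?_ hlt
      intro s hs
      exact heq s.succ (Fin.succ_lt_succ_iff.mpr hs)

lemma filterMap_getLast?_eq_pmap {β : Type*} (L : List (List β)) (h : ∀ l ∈ L, l ≠ []) :
    L.filterMap List.getLast? = L.pmap (fun l hl => l.getLast hl) h := by
  induction L with
  | nil => rfl
  | cons a L ih =>
    rw [List.pmap, List.filterMap_cons, List.getLast?_eq_getLast (h a (by simp))]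
    rw [ih fun l hl => h l (by simp [hl])]

lemma lex_append_last_iff {a b : List α} {x y : α} (hlen : a.length = b.length)
    (hne : a ≠ b) : (a ++ [x]) < (b ++ [y]) ↔ a < b := by
  induction a generalizing b with
  | nil => cases b with
    | nil => exact absurd rfl hne
    | cons _ _ => simp at hlen
  | cons c a ih =>
    cases b with
    | nil => simp at hlen
    | cons d b =>
      simp only [cons_append]
      rw [_root_.lex_cons_iff, _root_.lex_cons_iff]
      rcases eq_or_ne c d with rfl | hcd
      · have hab : a ≠ b := fun h => hne (by rw [h])
        rw [ih (by simpa using hlen) hab]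
      · constructor
        · rintro (h | ⟨rfl, _⟩); exacts [Or.inl h, absurd rfl hcd]
        · rintro (h | ⟨rfl, _⟩); exacts [Or.inl h, absurd rfl hcd]

omit [LinearOrder α] in
/-- two commuting words are powers of a common word -/
lemma comm_eq_pows : ∀ (N : ℕ) (A B : List α), A.length + B.length ≤ N →
    A ++ B = B ++ A →
    ∃ (v : List α) (a b : ℕ), A = (List.replicate a v).flatten ∧ B = (List.replicate b v).flatten ∧
      (A ≠ [] → 1 ≤ a) ∧ (B ≠ [] → 1 ≤ b) := by
  intro N
  induction N with
  | zero =>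
    intro A B hlen _
    have hA : A = [] := by simpa using (by omega : A.length = 0)
    have hB : B = [] := by simpa using (by omega : B.length = 0)
    exact ⟨[], 0, 0, by simp [hA], by simp [hB], fun h => absurd hA h, fun h => absurd hB h⟩
  | succ N ih =>
    intro A B hlen hcomm
    rcases eq_or_ne A [] with rfl | hA
    · exact ⟨B, 0, 1, by simp, by simp, by simp, fun _ => le_rfl⟩
    rcases eq_or_ne B [] with rfl | hB
    · exact ⟨A, 1, 0, by simp, by simp, fun _ => le_rfl, by simp⟩
    rcases le_total A.length B.length with hAB | hAB
    · have hpre : A = B.take A.length := by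
        have := congrArg (List.take A.length) hcomm
        simpa [List.take_left', List.take_append_of_le_length hAB] using this
      set C := B.drop A.length with hC
      have hBAC : B = A ++ C := by
        conv_lhs => rw [← List.take_append_drop A.length B, ← hpre]
      have hcomm' : A ++ C = C ++ A := by
        have : A ++ (A ++ C) = (A ++ C) ++ A := by rw [← hBAC]; exact hcomm
        rw [List.append_assoc] at this
        exact List.append_cancel_left this
      have hlen' : A.length + C.length ≤ N := by
        have : 1 ≤ A.length := List.length_pos_iff.mpr hA
        have : C.length = B.length - A.length := by simp [hC]
        omega
      obtain ⟨v, a, c, hAv, hCv, ha, _⟩ := ih A C hlen' hcomm'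
      refine ⟨v, a, a + c, hAv, ?_, ha, fun _ => by
        have := ha hA; omega⟩
      rw [hBAC, hAv, hCv, ← List.flatten_append, ← List.replicate_add]
    · have hpre : B = A.take B.length := by
        have := congrArg (List.take B.length) hcomm.symm
        simpa [List.take_left', List.take_append_of_le_length hAB] using this
      set C := A.drop B.length with hC
      have hABC : A = B ++ C := by
        conv_lhs => rw [← List.take_append_drop B.length A, ← hpre]
      have hcomm' : B ++ C = C ++ B := by
        have : B ++ (B ++ C) = (B ++ C) ++ B := by rw [← hABC]; exact hcomm.symm
        rw [List.append_assoc] at this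
        exact List.append_cancel_left this
      have hlen' : B.length + C.length ≤ N := by
        have : 1 ≤ B.length := List.length_pos_iff.mpr hB
        have : C.length = A.length - B.length := by simp [hC]
        omega
      obtain ⟨v, b, c, hBv, hCv, hb, _⟩ := ih B C hlen' hcomm'
      refine ⟨v, b + c, b, ?_, hBv, fun _ => by have := hb hB; omega, hb⟩
      rw [hABC, hBv, hCv, ← List.flatten_append, ← List.replicate_add]

lemma rotate_last {a : List α} (ha : a ≠ []) :
    a.rotate (a.length - 1) = a.getLast ha :: a.dropLast := by
  rw [List.rotate_eq_drop_append_take (by omega)]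
  have h1 : a.drop (a.length - 1) = [a.getLast ha] := by
    have h3 := List.drop_left' (l₁ := a.dropLast) (l₂ := [a.getLast ha])
      (i := a.length - 1) (by rw [List.length_dropLast])
    rw [List.dropLast_append_getLast ha] at h3
    exact h3
  have h2 : a.take (a.length - 1) = a.dropLast := (List.dropLast_eq_take (l := a)).symm
  rw [h1, h2, List.singleton_append]

end Helpers

lemma pow_mod_of_pow_eq_one {G : Type*} [Group G] {g : G} {n : ℕ} (h : g^n = 1) (a : ℕ) :
    g ^ a = g ^ (a % n) := by
  conv_lhs => rw [← Nat.div_add_mod a n]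
  rw [pow_add, pow_mul, h, one_pow, one_mul]

lemma orbit_pow_eq_one {n : ℕ} (π : Equiv.Perm (Fin n)) (i₀ : Fin n)
    (h : ∀ j, ∃ m, (π ^ m) i₀ = j) : π ^ n = 1 := by
  obtain ⟨a, b, hab, hg⟩ : ∃ a b : Fin (n+1), a ≠ b ∧ (π ^ (a:ℕ)) i₀ = (π ^ (b:ℕ)) i₀ := by
    obtain ⟨a, b, hab, hg⟩ := Fintype.exists_ne_map_eq_of_card_lt
      (fun m : Fin (n+1) => (π ^ (m:ℕ)) i₀) (by simp)
    exact ⟨a, b, hab, hg⟩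
  wlog hlt : (a:ℕ) < (b:ℕ) generalizing a b
  · exact this b a hab.symm hg.symm (by
      rcases lt_or_gt_of_ne (fun hc => hab (Fin.ext hc)) with h | h
      · exact absurd h hlt
      · exact h)
  obtain ⟨p, hppos, hpn, hpab⟩ : ∃ p, 0 < p ∧ p ≤ n ∧ p + (a:ℕ) = (b:ℕ) :=
    ⟨(b:ℕ) - (a:ℕ), by omega, by have := b.isLt; omega, by omega⟩
  have hper : (π ^ p) i₀ = i₀ := by
    apply (π ^ (a:ℕ)).injective
    have h1 : (π ^ (a:ℕ)) ((π ^ p) i₀) = (π ^ p) ((π ^ (a:ℕ)) i₀) := by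
      rw [← Equiv.Perm.mul_apply, ← Equiv.Perm.mul_apply, ← pow_add, ← pow_add, Nat.add_comm]
    rw [h1, ← Equiv.Perm.mul_apply, ← pow_add, hpab, hg]
  have hmulper : ∀ q : ℕ, (π ^ (p * q)) i₀ = i₀ := by
    intro q
    induction q with
    | zero => simp
    | succ q ih =>
      rw [Nat.mul_succ, pow_add, Equiv.Perm.mul_apply, hper, ih]
  have hmod : ∀ m : ℕ, (π ^ m) i₀ = (π ^ (m % p)) i₀ := by
    intro m
    conv_lhs => rw [← Nat.mod_add_div m p]
    rw [pow_add, Equiv.Perm.mul_apply, hmulper]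
  have hpn' : n ≤ p := by
    have hsub : (Finset.univ : Finset (Fin n)) ⊆
        Finset.image (fun m : Fin p => (π ^ (m:ℕ)) i₀) Finset.univ := by
      intro j _
      obtain ⟨m, hm⟩ := h j
      refine Finset.mem_image.mpr ⟨⟨m % p, Nat.mod_lt _ hppos⟩, Finset.mem_univ _, ?_⟩
      simp only []
      rw [← hmod m, hm]
    have h1 := Finset.card_le_card hsub
    have h2 : (Finset.image (fun m : Fin p => (π ^ (m:ℕ)) i₀) Finset.univ).card ≤ p :=
      le_trans Finset.card_image_le (by simp)
    simp only [Finset.card_univ, Fintype.card_fin] at h1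
    omega
  have hpe : p = n := le_antisymm hpn hpn'
  subst hpe
  ext j
  obtain ⟨m, hm⟩ := h j
  have h1 : (π ^ p) j = (π ^ m) ((π ^ p) i₀) := by
    rw [← hm, ← Equiv.Perm.mul_apply, ← Equiv.Perm.mul_apply, ← pow_add, ← pow_add, Nat.add_comm]
  simp [h1, hper, hm]

lemma orbit_trans {n : ℕ} (π : Equiv.Perm (Fin n)) (i₀ : Fin n)
    (h : ∀ j, ∃ m, (π ^ m) i₀ = j) : ∀ x j : Fin n, ∃ m < n, (π ^ m) x = j := by
  have hn1 : π ^ n = 1 := orbit_pow_eq_one π i₀ h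
  have hn : 0 < n := Fin.pos i₀
  have hb : ∀ j : Fin n, ∃ m < n, (π ^ m) i₀ = j := by
    intro j
    obtain ⟨m, hm⟩ := h j
    exact ⟨m % n, Nat.mod_lt _ hn, by rw [← pow_mod_of_pow_eq_one hn1, hm]⟩
  intro x j
  obtain ⟨a, ha, hax⟩ := hb x
  obtain ⟨b, hbn, hbj⟩ := hb j
  refine ⟨(b + n - a) % n, Nat.mod_lt _ hn, ?_⟩
  rw [← hax, ← Equiv.Perm.mul_apply, ← pow_add]
  rw [pow_mod_of_pow_eq_one hn1 ((b + n - a) % n + a)]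
  have h1 : ((b + n - a) % n + a) % n = ((b + n - a) + a) % n :=
    Nat.ModEq.add_right a (Nat.mod_modEq _ _)
  have h2 : (b + n - a) + a = b + n := by omega
  rw [h1, h2, Nat.add_mod_right, Nat.mod_eq_of_lt hbn, hbj]

lemma orbit_trans_inv {n : ℕ} (π : Equiv.Perm (Fin n)) (i₀ : Fin n)
    (h : ∀ j, ∃ m, (π ^ m) i₀ = j) : ∀ x j : Fin n, ∃ m < n, (π⁻¹ ^ m) x = j := by
  intro x j
  obtain ⟨m, hm, hπ⟩ := orbit_trans π i₀ h j x
  refine ⟨m, hm, ?_⟩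
  rw [inv_pow, ← hπ, Equiv.Perm.inv_def, Equiv.symm_apply_apply]

lemma mpr_main {k n : ℕ} (U : Fin n → Fin k) (π : Equiv.Perm (Fin n))
    (hπ : ∀ i j : Fin n, π i < π j ↔ (U i < U j ∨ (U i = U j ∧ i < j)))
    (i₀ : Fin n) (horb : ∀ j : Fin n, ∃ m : ℕ, (π ^ m) i₀ = j) :
    ∃ w : List (Fin k), Primitive w ∧ bwt w = List.ofFn U := by
  have hnpos : 0 < n := Fin.pos i₀
  set q : Equiv.Perm (Fin n) := π⁻¹ with hq
  have hqtrans : ∀ x j : Fin n, ∃ m < n, (q ^ m) x = j := orbit_trans_inv π i₀ horb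
  have hπn : π ^ n = 1 := orbit_pow_eq_one π i₀ horb
  have hqn : q ^ n = 1 := by rw [hq, inv_pow, hπn, inv_one]
  set F : Fin n → Fin k := fun r => U (q r) with hF
  have hFmono : ∀ r r' : Fin n, r < r' → F r ≤ F r' := by
    intro r r' hrr
    have h1 : π (q r) < π (q r') := by
      simp only [hq, Equiv.Perm.inv_def, Equiv.apply_symm_apply]; exact hrr
    rcases (hπ _ _).mp h1 with h | ⟨h, _⟩
    · exact le_of_lt h
    · exact le_of_eq h
  have hQ : ∀ r r' : Fin n, F r = F r' → r < r' → q r < q r' := by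
    intro r r' hFe hrr
    have h1 : π (q r) < π (q r') := by
      simp only [hq, Equiv.Perm.inv_def, Equiv.apply_symm_apply]; exact hrr
    rcases (hπ _ _).mp h1 with h | ⟨_, h⟩
    · have h2 : F r < F r' := h
      rw [hFe] at h2
      exact absurd h2 (lt_irrefl _)
    · exact h
  set row : Fin n → List (Fin k) := fun r => List.ofFn (fun s : Fin n => F ((q ^ (s:ℕ)) r))
    with hrow
  -- the key comparison claim
  have claim : ∀ ℓ : ℕ, ∀ r r' : Fin n, r < r' →
      (∃ m, m < ℓ ∧ (∀ s, s < m → F ((q^s) r) = F ((q^s) r')) ∧ F ((q^m) r) < F ((q^m) r')) ∨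
      (∀ s, s < ℓ → F ((q^s) r) = F ((q^s) r') ∧ (q^s) r < (q^s) r') := by
    intro ℓ
    induction ℓ with
    | zero => intro r r' _; exact Or.inr (fun s hs => absurd hs (by omega))
    | succ ℓ ih =>
      intro r r' hrr
      rcases ih r r' hrr with ⟨m, hm, he, hl⟩ | hR
      · exact Or.inl ⟨m, by omega, he, hl⟩
      · have hlt : (q^ℓ) r < (q^ℓ) r' := by
          cases ℓ with
          | zero => simpa using hrr
          | succ ℓ' =>
            obtain ⟨he', hl'⟩ := hR ℓ' (by omega)
            have := hQ _ _ he' hl'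
            rw [pow_succ' q ℓ'] at *
            simpa [Equiv.Perm.mul_apply] using this
        rcases lt_or_eq_of_le (hFmono _ _ hlt) with hFlt | hFeq
        · exact Or.inl ⟨ℓ, by omega, fun s hs => (hR s hs).1, hFlt⟩
        · refine Or.inr (fun s hs => ?_)
          rcases Nat.lt_succ_iff_lt_or_eq.mp hs with hs' | rfl
          · exact hR s hs'
          · exact ⟨hFeq, hlt⟩
  have hrowlt : ∀ r r' : Fin n, r < r' → row r < row r' := by
    intro r r' hrr
    rcases claim n r r' hrr with ⟨m, hm, he, hl⟩ | hR
    · refine ofFn_lt_of_firstDiff (m := ⟨m, hm⟩) ?_ hl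
      intro s hs
      exact he (s:ℕ) hs
    · obtain ⟨s, hs, h0⟩ := hqtrans r' ⟨0, hnpos⟩
      obtain ⟨_, hlt⟩ := hR s hs
      rw [h0] at hlt
      simpa [Fin.lt_iff_val_lt_val] using hlt
  have hrowinj : Function.Injective row := by
    intro r r' hrr
    rcases lt_trichotomy r r' with h | h | h
    · exact absurd (hrr ▸ hrowlt r r' h) (lt_irrefl _)
    · exact h
    · exact absurd (hrr ▸ hrowlt r' r h) (lt_irrefl _)
  set e : Fin n → Fin n := fun m => (q ^ (m:ℕ)) i₀ with he
  have hesurj : Function.Surjective e := by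
    intro j
    obtain ⟨m, hm, hmj⟩ := hqtrans i₀ j
    exact ⟨⟨m, hm⟩, hmj⟩
  have heinj : Function.Injective e := Finite.injective_iff_surjective.mpr hesurj
  set w : List (Fin k) := row i₀ with hw
  have hwlen : w.length = n := by simp [hw, hrow]
  have hgl : ∀ (r : Fin n) (t : ℕ) (ht : t < (row r).length),
      (row r).get ⟨t, ht⟩ = F ((q ^ t) r) := by
    intro r t ht
    rw [List.get_ofFn]
    rfl
  have hrl : ∀ r : Fin n, (row r).length = n := by intro r; simp [hrow]
  -- rotations of w are rows
  have hrot : ∀ m : Fin n, w.rotate (m:ℕ) = row (e m) := by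
    intro m
    apply List.ext_get
    · simp [hrow, hwlen]
    · intro s h1 h2
      have hwget : ∀ (t : ℕ) (ht : t < w.length), w.get ⟨t, ht⟩ = F ((q ^ t) i₀) :=
        fun t ht => hgl i₀ t ht
      rw [List.get_rotate, hwget, hgl]
      congr 1
      rw [hwlen]
      show (q ^ ((s + (m:ℕ)) % n)) i₀ = (q ^ s) (e m)
      rw [← pow_mod_of_pow_eq_one hqn (s + (m:ℕ)), pow_add, Equiv.Perm.mul_apply]
  -- the sorted list of rotations is exactly `ofFn row`
  have hrowle : (List.ofFn row).Pairwise (· ≤ ·) := by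
    rw [List.pairwise_ofFn]
    intro i j hij
    exact le_of_lt (hrowlt i j hij)
  have hrotsperm : ((List.range w.length).map (fun i => w.rotate i)).Perm (List.ofFn row) := by
    have heq : (List.range w.length).map (fun i => w.rotate i)
        = List.ofFn (fun m : Fin n => row (e m)) := by
      apply List.ext_get
      · simp [hwlen]
      · intro s h1 h2
        have hs : s < n := by simpa [hwlen] using h2
        rw [List.get_eq_getElem, List.getElem_map, ← List.get_eq_getElem (l := List.range w.length) (i := ⟨s, by simpa [hwlen] using hs⟩), List.get_ofFn]
        have h3 : (List.range w.length).get ⟨s, by simpa [hwlen] using hs⟩ = s :=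
          by simp
        rw [h3]
        exact hrot ⟨s, hs⟩
    rw [heq]
    refine (List.perm_ext_iff_of_nodup ?_ ?_).mpr ?_
    · exact List.nodup_ofFn.mpr (hrowinj.comp heinj)
    · exact List.nodup_ofFn.mpr hrowinj
    · intro a
      rw [List.mem_ofFn, List.mem_ofFn]
      constructor
      · rintro ⟨m, hm⟩; exact ⟨e m, hm⟩
      · rintro ⟨r, hr⟩
        obtain ⟨m, rfl⟩ := hesurj r
        exact ⟨m, hr⟩
  have hsort : List.insertionSort (· ≤ ·) ((List.range w.length).map (fun i => w.rotate i))
      = List.ofFn row :=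
    List.Perm.eq_of_pairwise' (List.pairwise_insertionSort _ _) hrowle
      ((List.perm_insertionSort _ _).trans hrotsperm)
  -- last letters
  have hrowne : ∀ r : Fin n, row r ≠ [] := by
    intro r
    apply List.ne_nil_of_length_pos
    rw [hrl r]; exact hnpos
  have hlast : ∀ (r : Fin n) (h : row r ≠ []), (row r).getLast h = U r := by
    intro r h
    simp only [List.get_eq_getElem] at hgl; rw [List.getLast_eq_getElem, hgl _ _ (by rw [hrl r]; omega)]
    have h1 : q ((q ^ ((row r).length - 1)) r) = r := by
      rw [hrl r, ← Equiv.Perm.mul_apply, ← pow_succ' q (n-1), show n-1+1 = n by omega, hqn]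
      rfl
    show U (q ((q ^ ((row r).length - 1)) r)) = U r
    rw [h1]
  have hbwt : bwt w = List.ofFn U := by
    rw [bwt, hsort]
    rw [filterMap_getLast?_eq_pmap _ (by
      intro l hl
      rw [List.mem_ofFn] at hl
      obtain ⟨r, rfl⟩ := hl
      exact hrowne r)]
    apply List.ext_get
    · simp [List.length_pmap]
    · intro s h1 h2
      rw [List.get_eq_getElem, List.getElem_pmap]
      conv_rhs => rw [List.get_ofFn]
      have hs : s < n := by simpa using h2
      have hgoal : ∀ (l : List (Fin k)) (hl : l ≠ []), l = row ⟨s, hs⟩ →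
          l.getLast hl = U ⟨s, hs⟩ := by
        intro l hl heq
        subst heq
        exact hlast _ _
      exact (hgoal _ _ (by rw [List.getElem_ofFn])).trans rfl
  -- primitivity
  have hprim : Primitive w := by
    constructor
    · intro hnil
      rw [hnil] at hwlen
      simp at hwlen
      omega
    · intro v m hvm
      by_contra hm1
      have hlenw : w.length = m * v.length := by
        rw [hvm]
        simp [List.length_flatten, List.map_replicate, List.sum_replicate]
      rcases Nat.eq_zero_or_pos m with rfl | hmpos
      · rw [hvm] at hwlen; simp at hwlen; omega
      have hm2 : 2 ≤ m := by omega
      have hvne : v ≠ [] := by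
        intro hv
        rw [hv, List.length_nil, Nat.mul_zero] at hlenw
        omega
      have hd0 : 0 < v.length := List.length_pos_iff.mpr hvne
      have hdn : v.length < n := by
        have h2d : 2 * v.length ≤ m * v.length := Nat.mul_le_mul_right _ hm2
        omega
      have hrotd : w.rotate v.length = w := by
        conv_lhs => rw [hvm]
        have hrep : List.replicate m v = v :: List.replicate (m-1) v := by
          rw [← List.replicate_succ, show m-1+1 = m by omega]
        rw [hrep, List.flatten_cons]
        rw [List.rotate_eq_drop_append_take (by simp)]
        rw [List.drop_left' rfl, List.take_left]
        conv_rhs => rw [hvm]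
        rw [show (List.replicate (m-1) v).flatten ++ v
            = ((List.replicate (m-1) v) ++ [v]).flatten by simp,
          ← List.replicate_succ', show m-1+1 = m by omega]
      have h2 : row (e ⟨v.length, hdn⟩) = row (e ⟨0, hnpos⟩) := by
        rw [← hrot, ← hrot]
        show w.rotate v.length = w.rotate 0
        rw [hrotd, List.rotate_zero]
      have h3 := heinj (hrowinj h2)
      rw [Fin.ext_iff] at h3
      have h4 : v.length = 0 := h3
      omega
  exact ⟨w, hprim, hbwt⟩

lemma perm_eq_of_lt_iff {n : ℕ} (π σ : Equiv.Perm (Fin n))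
    (h : ∀ i j, π i < π j ↔ σ i < σ j) : π = σ := by
  have hf : StrictMono (fun a => π (σ.symm a)) := by
    intro a b hab
    exact (h _ _).mpr (by simpa using hab)
  have hg : StrictMono (fun a => σ (π.symm a)) := by
    intro a b hab
    exact (h _ _).mp (by simpa using hab)
  haveI : WellFoundedLT (Fin n) := inferInstance
  ext i
  have h1 : σ i ≤ π (σ.symm (σ i)) := hf.le_apply (x := σ i)
  have h2 : π i ≤ σ (π.symm (π i)) := hg.le_apply (x := π i)
  simp only [Equiv.symm_apply_apply] at h1 h2
  exact congrArg Fin.val (Fin.le_antisymm h2 h1)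

lemma fin_neg_one_val {n : ℕ} [NeZero n] : ((-1 : Fin n)).val = n - 1 := by
  have hn : 0 < n := Nat.pos_of_ne_zero (NeZero.ne n)
  rcases Nat.eq_or_lt_of_le hn with h1 | h1
  · have h2 : ((-1 : Fin n)).val < n := Fin.is_lt _
    omega
  · rw [Fin.neg_def]
    show (n - (1 : Fin n).val) % n = n - 1
    rw [Fin.val_one', Nat.mod_eq_of_lt h1, Nat.mod_eq_of_lt (by omega)]

open Fin.NatCast Fin.CommRing in
lemma mp_main {k n : ℕ} (U : Fin n → Fin k) (w : List (Fin k)) (hwne : w ≠ [])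
    (hpow : ∀ (v : List (Fin k)) (m : ℕ), w = (List.replicate m v).flatten → m = 1)
    (hbwt : bwt w = List.ofFn U) (hwlen : w.length = n) (hnpos : 0 < n) :
    ∃ ρ : Equiv.Perm (Fin n), (∀ i j : Fin n, ρ i < ρ j ↔ (U i < U j ∨ (U i = U j ∧ i < j)))
      ∧ ∃ i₀ : Fin n, ∀ j : Fin n, ∃ m : ℕ, (ρ ^ m) i₀ = j := by
  haveI : NeZero n := ⟨hnpos.ne'⟩
  set rots := (List.range w.length).map (fun i => w.rotate i) with hrots
  set R := List.insertionSort (· ≤ ·) rots with hR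
  have hRperm : R.Perm rots := List.perm_insertionSort _ _
  have hmemne : ∀ l ∈ R, l ≠ [] := by
    intro l hl
    rw [hRperm.mem_iff, hrots, List.mem_map] at hl
    obtain ⟨i, _, rfl⟩ := hl
    intro hc
    have h1 := congrArg List.length hc
    rw [List.length_rotate, hwlen, List.length_nil] at h1
    omega
  have hRlen : R.length = n := by
    have h1 : R.length = rots.length := hRperm.length_eq
    rw [h1, hrots, List.length_map, List.length_range, hwlen]
  -- rotations are pairwise distinct since w is primitive
  have hrotinj : ∀ i < n, ∀ j < n, w.rotate i = w.rotate j → i = j := by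
    suffices hs : ∀ i j, i ≤ j → j < n → w.rotate i = w.rotate j → i = j by
      intro i hi j hj hij
      rcases le_total i j with h | h
      · exact hs i j h hj hij
      · exact (hs j i h hi hij.symm).symm
    intro i j hij hjn heq
    rcases Nat.eq_or_lt_of_le hij with rfl | hlt
    · rfl
    exfalso
    have hd : w.rotate (i + (n - j)) = w := by
      have h1 := congrArg (fun l => l.rotate (n - j)) heq
      simp only [List.rotate_rotate] at h1
      rw [show j + (n - j) = n by omega] at h1
      have h2 : w.rotate n = w := by rw [← hwlen]; exact List.rotate_length w
      rw [h2] at h1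
      exact h1
    set d := i + (n - j) with hdd
    have hd0 : 0 < d := by omega
    have hdn : d < n := by omega
    have hcomm : (w.take d) ++ (w.drop d) = (w.drop d) ++ (w.take d) := by
      conv_lhs => rw [List.take_append_drop]
      rw [← List.rotate_eq_drop_append_take (by omega : d ≤ w.length), hd]
    obtain ⟨v, a, b, hA, hB, ha, hb⟩ :=
      comm_eq_pows (w.take d ++ w.drop d).length _ _ (le_of_eq (List.length_append).symm) hcomm
    have hane : w.take d ≠ [] := by
      intro hc
      have h1 := congrArg List.length hc
      rw [List.length_take, List.length_nil] at h1
      omega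
    have hbne : w.drop d ≠ [] := by
      intro hc
      have h1 := congrArg List.length hc
      rw [List.length_drop, List.length_nil] at h1
      omega
    have hw2 : w = (List.replicate (a + b) v).flatten := by
      conv_lhs => rw [← List.take_append_drop d w]
      rw [hA, hB, ← List.flatten_append, ← List.replicate_add]
    have hab1 := hpow v (a + b) hw2
    have ha1 := ha hane
    have hb1 := hb hbne
    omega
  have hRnodup : R.Nodup := by
    rw [hRperm.nodup_iff, hrots]
    refine List.Nodup.map_on ?_ List.nodup_range
    intro x hx y hy hxy
    rw [List.mem_range, hwlen] at hx hy
    exact hrotinj x hx y hy hxy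
  have hRsortlt : R.Pairwise (· < ·) :=
    ((List.pairwise_insertionSort _ _).and hRnodup).imp (fun h => lt_of_le_of_ne h.1 h.2)
  set G : Fin n → List (Fin k) := fun j => R.get (Fin.cast hRlen.symm j) with hG
  have hGmono : StrictMono G := by
    intro a b hab
    exact List.pairwise_iff_get.mp hRsortlt _ _ (show Fin.cast hRlen.symm a < Fin.cast hRlen.symm b from hab)
  have hT : ∀ j : Fin n, ∃ i : Fin n, G j = w.rotate (i:ℕ) := by
    intro j
    have hmem : G j ∈ R := List.get_mem _ _
    rw [hRperm.mem_iff, hrots, List.mem_map] at hmem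
    obtain ⟨i, hi, hieq⟩ := hmem
    rw [List.mem_range, hwlen] at hi
    exact ⟨⟨i, hi⟩, hieq.symm⟩
  choose T hTspec using hT
  have hTinj : Function.Injective T := by
    intro a b hab
    exact hGmono.injective (by rw [hTspec, hTspec, hab])
  have hTbij : Function.Bijective T :=
    ⟨hTinj, Finite.injective_iff_surjective.mp hTinj⟩
  set ET : Equiv.Perm (Fin n) := Equiv.ofBijective T hTbij with hET
  set d1 : Fin n := ⟨n - 1, by omega⟩ with hd1
  set ρ : Equiv.Perm (Fin n) := (ET.trans (Equiv.addRight d1)).trans ET.symm with hρ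
  have hρapp : ∀ j, ρ j = ET.symm (T j + d1) := fun j => rfl
  have hTρ : ∀ j, T (ρ j) = T j + d1 := by
    intro j
    rw [hρapp]
    exact ET.apply_symm_apply _
  -- relating U to last letters
  have hbwt2 : R.pmap (fun l hl => l.getLast hl) hmemne = List.ofFn U :=
    (filterMap_getLast?_eq_pmap _ hmemne).symm.trans hbwt
  have hGlen : ∀ j, (G j).length = n := by
    intro j
    rw [hTspec j, List.length_rotate, hwlen]
  have hGne : ∀ j, G j ≠ [] := fun j =>
    List.ne_nil_of_length_pos (by rw [hGlen]; omega)
  have hlastU : ∀ (j : Fin n) (hne : G j ≠ []), (G j).getLast hne = U j := by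
    intro j hne
    have h1 := List.get_of_eq hbwt2 ⟨(j:ℕ), by rw [List.length_pmap, hRlen]; exact j.isLt⟩
    rw [List.get_eq_getElem, List.getElem_pmap] at h1
    conv_rhs at h1 => rw [List.get_ofFn]
    exact h1
  have hGRS : ∀ j : Fin n, G (ρ j) = U j :: (G j).dropLast := by
    intro j
    have h1 : G (ρ j) = w.rotate ((T j + d1 : Fin n) : ℕ) := by
      rw [hTspec (ρ j), hTρ]
    have h2 : w.rotate ((T j + d1 : Fin n) : ℕ) = (G j).rotate (n - 1) := by
      rw [hTspec j, List.rotate_rotate, Fin.add_def]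
      show w.rotate (((T j : ℕ) + (n-1)) % n) = w.rotate ((T j : ℕ) + (n-1))
      conv_lhs => rw [show ((T j : ℕ) + (n-1)) % n = ((T j : ℕ) + (n-1)) % w.length by
        rw [hwlen]]
      exact List.rotate_mod _ _
    have h3 : (G j).rotate (n - 1) = (G j).rotate ((G j).length - 1) := by
      rw [hGlen]
    rw [h1, h2, h3, rotate_last (hGne j), hlastU j (hGne j)]
  -- the characterization of ρ
  have hρchar : ∀ i j : Fin n, ρ i < ρ j ↔ (U i < U j ∨ (U i = U j ∧ i < j)) := by
    intro i j
    rcases eq_or_ne i j with rfl | hij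
    · simp
    · have hGij : G i ≠ G j := fun hc => hij (hGmono.injective hc)
      have hdlne : (G i).dropLast ≠ (G j).dropLast := by
        intro hc
        apply hGij
        set x := (G i).getLast (hGne i) with hx
        set y := (G j).getLast (hGne j) with hy
        have hpm : (G i).Perm (G j) := by
          rw [hTspec i, hTspec j]
          exact (List.rotate_perm _ _).trans (List.rotate_perm _ _).symm
        have hgi : (G i).dropLast ++ [x] = G i := List.dropLast_append_getLast (hGne i)
        have hgj : (G j).dropLast ++ [y] = G j := List.dropLast_append_getLast (hGne j)
        have hcnt := hpm.count_eq x
        rw [← hgi, ← hgj, hc, List.count_append, List.count_append] at hcnt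
        have hxy : y = x := by
          by_contra hne2
          simp [List.count_singleton, hne2] at hcnt
        rw [← hgi, ← hgj, hc, hxy]
      rw [← hGmono.lt_iff_lt, hGRS i, hGRS j, _root_.lex_cons_iff]
      have hiff : (G i).dropLast < (G j).dropLast ↔ i < j := by
        rw [← hGmono.lt_iff_lt]
        conv_rhs =>
          rw [← List.dropLast_append_getLast (hGne i), ← List.dropLast_append_getLast (hGne j)]
        rw [lex_append_last_iff
          (by rw [List.length_dropLast, List.length_dropLast, hGlen, hGlen]) hdlne]
      rw [hiff]
  -- ρ has a full orbit
  have hpowρ : ∀ (m : ℕ) (j : Fin n), (ρ ^ m) j = ET.symm (T j + (m : Fin n) * d1) := by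
    intro m
    induction m with
    | zero =>
      intro j
      simp only [pow_zero, Equiv.Perm.one_apply, Nat.cast_zero, zero_mul, add_zero]
      exact (ET.symm_apply_apply j).symm
    | succ m ih =>
      intro j
      rw [pow_succ, Equiv.Perm.mul_apply, ih, hρapp]
      have hTs : ∀ x, T (ET.symm x) = x := fun x => ET.apply_symm_apply x
      rw [hTs]
      congr 1
      push_cast
      ring
  refine ⟨ρ, hρchar, ET.symm 0, ?_⟩
  intro j
  have hd1neg : d1 = -1 := by
    apply Fin.ext
    show n - 1 = ((-1 : Fin n)).val
    rw [fin_neg_one_val]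
  refine ⟨(-(T j)).val, ?_⟩
  rw [hpowρ, Fin.cast_val_eq_self, hd1neg]
  have hT0 : T (ET.symm 0) = 0 := ET.apply_symm_apply 0
  rw [hT0]
  have h1 : (0 : Fin n) + (-(T j)) * (-1) = T j := by ring
  rw [h1]
  exact ET.symm_apply_apply j

lemma bwt_length {k : ℕ} (w : List (Fin k)) (hwne : w ≠ []) : (bwt w).length = w.length := by
  have hmemne : ∀ l ∈ List.insertionSort (· ≤ ·)
      ((List.range w.length).map (fun i => w.rotate i)), l ≠ [] := by
    intro l hl
    rw [(List.perm_insertionSort _ _).mem_iff, List.mem_map] at hl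
    obtain ⟨i, _, rfl⟩ := hl
    intro hc
    have h1 := congrArg List.length hc
    rw [List.length_rotate, List.length_nil] at h1
    exact hwne (List.length_eq_zero_iff.mp h1)
  rw [bwt, filterMap_getLast?_eq_pmap _ hmemne, List.length_pmap,
    (List.perm_insertionSort _ _).length_eq, List.length_map, List.length_range]

/-- A word `u` over a finite ordered alphabet is the BWT of some aperiodic necklace iff
its standard permutation is a single cycle of length `|u|` (i.e. some point has full
orbit). -/
theorem stmt17 (k : ℕ) (u : List (Fin k)) (π : Equiv.Perm (Fin u.length))
    (hπ : ∀ i j : Fin u.length,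
      π i < π j ↔ (u.get i < u.get j ∨ (u.get i = u.get j ∧ i < j))) :
    (∃ w : List (Fin k), Primitive w ∧ bwt w = u) ↔
      ∃ i : Fin u.length, ∀ j : Fin u.length, ∃ m : ℕ, (π ^ m) i = j := by
  constructor
  · rintro ⟨w, ⟨hwne, hwpow⟩, hbwt⟩
    have hwlen : w.length = u.length := by rw [← bwt_length w hwne, hbwt]
    have hnpos : 0 < u.length := by
      rw [← hwlen]
      exact List.length_pos_iff.mpr hwne
    obtain ⟨ρ, hρchar, i₀, horb⟩ := mp_main (n := u.length) u.get w hwne hwpow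
      (by rw [hbwt, List.ofFn_get]) hwlen hnpos
    have hπρ : π = ρ := perm_eq_of_lt_iff _ _ (fun i j => (hπ i j).trans (hρchar i j).symm)
    exact ⟨i₀, fun j => by rw [hπρ]; exact horb j⟩
  · rintro ⟨i₀, horb⟩
    obtain ⟨w, hprim, hbwt⟩ := mpr_main u.get π hπ i₀ horb
    exact ⟨w, hprim, by rw [hbwt, List.ofFn_get]⟩
end
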